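/- Let T = proj-lim T_λ ∈ B_loc(H) be a locally bounded operator on a locally Hilbert space H = ⋃_λ H_λ. Then the resolvent set satisfies ρ(T) = ⋂_{λ∈Λ} ρ(T_λ) and the spectrum satisfies σ(T) = ⋃_{λ∈Λ} σ(T_λ), where ρ(T_λ), σ(T_λ) are the usual resolvent set and spectrum of the bounded operator T_λ on the Hilbert space H_λ. -/

import Mathlib

local notation "⟪" x ", " y "⟫" => @inner ℂ _ _ x y

/-- A linear map `T` on a locally Hilbert space `H = ⋃ H_λ` is locally bounded if, for every
`λ`, `T` leaves `H_λ` and `H_λ^⊥` invariant and `T|_{H_λ}` is bounded. -/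
def IsLocallyBounded {Λ H : Type*} [Preorder Λ]
    [NormedAddCommGroup H] [InnerProductSpace ℂ H]
    (Hs : Λ → Submodule ℂ H) (T : H →ₗ[ℂ] H) : Prop :=
  ∀ l : Λ,
    (∀ h ∈ Hs l, T h ∈ Hs l) ∧
    (∀ h : H, (∀ u ∈ Hs l, ⟪u, h⟫ = 0) → ∀ u ∈ Hs l, ⟪u, T h⟫ = 0) ∧
    (∃ C : ℝ, ∀ h ∈ Hs l, ‖T h‖ ≤ C * ‖h‖)

/-- For `T = proj-lim T_λ ∈ B_loc(H)` on a locally Hilbert space `H = ⋃ H_λ`,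
the resolvent set (invertibility of `zI − T` within the locally bounded operators) equals
`⋂_λ ρ(T_λ)` and the spectrum equals `⋃_λ σ(T_λ)`, where `T_λ = T|_{H_λ}`. -/
theorem locally_bounded_spectrum {Λ H : Type*} [Preorder Λ] [Nonempty Λ]
    [NormedAddCommGroup H] [InnerProductSpace ℂ H]
    (hdir : ∀ a b : Λ, ∃ c, a ≤ c ∧ b ≤ c)
    (Hs : Λ → Submodule ℂ H)
    (hmono : ∀ {a b : Λ}, a ≤ b → Hs a ≤ Hs b)
    (hcover : ∀ h : H, ∃ l, h ∈ Hs l)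
    (hcomplete : ∀ l, IsComplete (Hs l : Set H))
    (T : H →ₗ[ℂ] H)
    (hT : IsLocallyBounded Hs T) :
    ({z : ℂ | ∃ S : H →ₗ[ℂ] H, IsLocallyBounded Hs S ∧
        (z • (LinearMap.id : H →ₗ[ℂ] H) - T) ∘ₗ S = LinearMap.id ∧
        S ∘ₗ (z • (LinearMap.id : H →ₗ[ℂ] H) - T) = LinearMap.id}
      = ⋂ l, resolventSet ℂ
          (LinearMap.restrict T (fun x hx => (hT l).1 x hx) : Module.End ℂ (Hs l))) ∧
    ({z : ℂ | ∃ S : H →ₗ[ℂ] H, IsLocallyBounded Hs S ∧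
        (z • (LinearMap.id : H →ₗ[ℂ] H) - T) ∘ₗ S = LinearMap.id ∧
        S ∘ₗ (z • (LinearMap.id : H →ₗ[ℂ] H) - T) = LinearMap.id}ᶜ
      = ⋃ l, spectrum ℂ
          (LinearMap.restrict T (fun x hx => (hT l).1 x hx) : Module.End ℂ (Hs l))) := by
  classical
  have key : ∀ z : ℂ,
      (∃ S : H →ₗ[ℂ] H, IsLocallyBounded Hs S ∧
        (z • (LinearMap.id : H →ₗ[ℂ] H) - T) ∘ₗ S = LinearMap.id ∧
        S ∘ₗ (z • (LinearMap.id : H →ₗ[ℂ] H) - T) = LinearMap.id) ↔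
      ∀ l, z ∈ resolventSet ℂ
          (LinearMap.restrict T (fun x hx => (hT l).1 x hx) : Module.End ℂ (Hs l)) := by
    intro z
    set A : H →ₗ[ℂ] H := z • (LinearMap.id : H →ₗ[ℂ] H) - T with hA_def
    have hAapp : ∀ h : H, A h = z • h - T h := by
      intro h; rw [hA_def]; simp
    set Al : ∀ l : Λ, Module.End ℂ (Hs l) := fun l =>
      algebraMap ℂ (Module.End ℂ (Hs l)) z -
        LinearMap.restrict T (fun x hx => (hT l).1 x hx) with hAl_def
    have hAl_val : ∀ (l : Λ) (x : Hs l), (((Al l) x : Hs l) : H) = A (x : H) := by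
      intro l x
      rw [hAapp]
      simp [hAl_def, Module.algebraMap_end_apply]
    have hAmem : ∀ (l : Λ), ∀ h ∈ Hs l, A h ∈ Hs l := by
      intro l h hh
      rw [hAapp]
      exact Submodule.sub_mem _ (Submodule.smul_mem _ _ hh) ((hT l).1 h hh)
    have hAorth : ∀ (l : Λ) (h : H), h ∈ (Hs l)ᗮ → A h ∈ (Hs l)ᗮ := by
      intro l h hh
      rw [Submodule.mem_orthogonal]
      intro u hu
      have h1 := (hT l).2.1 h (fun u hu => (Submodule.mem_orthogonal _ _).1 hh u hu) u hu
      have h2 := (Submodule.mem_orthogonal _ _).1 hh u hu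
      rw [hAapp, inner_sub_right, inner_smul_right, h1, h2, mul_zero, sub_zero]
    constructor
    · rintro ⟨S, hS, hAS, hSA⟩ l
      rw [spectrum.mem_resolventSet_iff, isUnit_iff_exists]
      refine ⟨S.restrict (fun x hx => (hS l).1 x hx), ?_, ?_⟩
      · apply LinearMap.ext
        intro x
        apply Subtype.ext
        have h1 := LinearMap.congr_fun hAS (x : H)
        simp only [LinearMap.comp_apply, LinearMap.id_apply] at h1
        have : ((algebraMap ℂ (Module.End ℂ (Hs l)) z -
            LinearMap.restrict T (fun x hx => (hT l).1 x hx)) *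
            S.restrict (fun x hx => (hS l).1 x hx)) x = (Al l)
            ((S.restrict (fun x hx => (hS l).1 x hx)) x) := rfl
        rw [this]
        rw [hAl_val]
        simp only [LinearMap.restrict_coe_apply]
        simpa using h1
      · apply LinearMap.ext
        intro x
        apply Subtype.ext
        have h1 := LinearMap.congr_fun hSA (x : H)
        simp only [LinearMap.comp_apply, LinearMap.id_apply] at h1
        have : ((S.restrict (fun x hx => (hS l).1 x hx)) *
            (algebraMap ℂ (Module.End ℂ (Hs l)) z -
            LinearMap.restrict T (fun x hx => (hT l).1 x hx))) x
            = (S.restrict (fun x hx => (hS l).1 x hx)) ((Al l) x) := rfl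
        rw [this]
        simp only [LinearMap.restrict_coe_apply, hAl_val]
        simpa using h1
    · intro hz
      have hz' : ∀ l, ∃ Rl : Module.End ℂ (Hs l), (Al l) * Rl = 1 ∧ Rl * (Al l) = 1 := by
        intro l
        have := spectrum.mem_resolventSet_iff.mp (hz l)
        exact isUnit_iff_exists.mp this
      choose R hR1 hR2 using hz'
      have hAR : ∀ (l : Λ) (x : Hs l), (Al l) ((R l) x) = x := by
        intro l x
        have := LinearMap.congr_fun (hR1 l) x
        simpa using this
      have hRA : ∀ (l : Λ) (x : Hs l), (R l) ((Al l) x) = x := by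
        intro l x
        have := LinearMap.congr_fun (hR2 l) x
        simpa using this
      have hinj : ∀ (l : Λ) (x : Hs l), (Al l) x = 0 → x = 0 := by
        intro l x hx
        have := hRA l x
        rw [hx, map_zero] at this
        exact this.symm
      -- key invariance lemmas
      have key1 : ∀ (a b : Λ), a ≤ b → ∀ (x : Hs b) (hxa : (x : H) ∈ Hs a),
          ∃ hy : (((R b) x : Hs b) : H) ∈ Hs a,
            (R a) ⟨(x : H), hxa⟩ = ⟨(((R b) x : Hs b) : H), hy⟩ := by
        intro a b hab x hxa
        haveI : CompleteSpace (Hs a) := (hcomplete a).completeSpace_coe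
        set y : H := (((R b) x : Hs b) : H) with hy_def
        set u : H := ((Hs a).orthogonalProjectionOnto y : H) with hu_def
        have hu_mem : u ∈ Hs a := ((Hs a).orthogonalProjectionOnto y).2
        set v : H := y - u with hv_def
        have hv_orth : v ∈ (Hs a)ᗮ := (Hs a).sub_starProjection_mem_orthogonal y
        have hy_mem_b : y ∈ Hs b := ((R b) x).2
        have hv_mem_b : v ∈ Hs b := Submodule.sub_mem _ hy_mem_b (hmono hab hu_mem)
        have hAy : A y = (x : H) := by
          rw [← hAl_val b ((R b) x), hAR]
        have hAv_mem : A v ∈ Hs a := by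
          have h3 : A v = A y - A u := by rw [hv_def, map_sub]
          rw [h3, hAy]
          exact Submodule.sub_mem _ hxa (hAmem a u hu_mem)
        have hAv_orth : A v ∈ (Hs a)ᗮ := hAorth a v hv_orth
        have hAv0 : A v = 0 := by
          have := (Submodule.mem_orthogonal _ _).1 hAv_orth (A v) hAv_mem
          exact inner_self_eq_zero.mp this
        have hv0 : v = 0 := by
          have h1 : (Al b) ⟨v, hv_mem_b⟩ = 0 := by
            apply Subtype.ext
            rw [hAl_val]
            exact hAv0
          have := hinj b ⟨v, hv_mem_b⟩ h1
          exact congrArg Subtype.val this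
        have hyu : y = u := by
          have : y - u = 0 := by rw [← hv_def]; exact hv0
          exact sub_eq_zero.mp this
        have hy_mem_a : y ∈ Hs a := by rw [hyu]; exact hu_mem
        refine ⟨hy_mem_a, ?_⟩
        have h2 : (Al a) ⟨y, hy_mem_a⟩ = ⟨(x : H), hxa⟩ := by
          apply Subtype.ext
          rw [hAl_val]
          exact hAy
        calc (R a) ⟨(x : H), hxa⟩ = (R a) ((Al a) ⟨y, hy_mem_a⟩) := by rw [h2]
          _ = ⟨y, hy_mem_a⟩ := hRA a _
      have key2 : ∀ (a b : Λ), a ≤ b → ∀ (x : Hs b), (x : H) ∈ (Hs a)ᗮ →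
          (((R b) x : Hs b) : H) ∈ (Hs a)ᗮ := by
        intro a b hab x hxa
        haveI : CompleteSpace (Hs a) := (hcomplete a).completeSpace_coe
        set y : H := (((R b) x : Hs b) : H) with hy_def
        set u : H := ((Hs a).orthogonalProjectionOnto y : H) with hu_def
        have hu_mem : u ∈ Hs a := ((Hs a).orthogonalProjectionOnto y).2
        set v : H := y - u with hv_def
        have hv_orth : v ∈ (Hs a)ᗮ := (Hs a).sub_starProjection_mem_orthogonal y
        have hAy : A y = (x : H) := by
          rw [← hAl_val b ((R b) x), hAR]
        have hAu_mem : A u ∈ Hs a := hAmem a u hu_mem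
        have hAu_orth : A u ∈ (Hs a)ᗮ := by
          have h3 : A u = (x : H) - A v := by
            rw [hv_def, map_sub, hAy]; abel
          rw [h3]
          exact Submodule.sub_mem _ hxa (hAorth a v hv_orth)
        have hAu0 : A u = 0 := by
          have := (Submodule.mem_orthogonal _ _).1 hAu_orth (A u) hAu_mem
          exact inner_self_eq_zero.mp this
        have hu0 : u = 0 := by
          have h1 : (Al a) ⟨u, hu_mem⟩ = 0 := by
            apply Subtype.ext
            rw [hAl_val]
            exact hAu0
          exact congrArg Subtype.val (hinj a ⟨u, hu_mem⟩ h1)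
        have : y = v := by rw [hv_def, hu0, sub_zero]
        rw [this]
        exact hv_orth
      -- the global inverse as a plain function
      set f : H → H := fun h =>
        (((R (hcover h).choose) ⟨h, (hcover h).choose_spec⟩ : Hs (hcover h).choose) : H)
        with hf_def
      have hf : ∀ (l : Λ) (h : H) (hh : h ∈ Hs l),
          f h = (((R l) ⟨h, hh⟩ : Hs l) : H) := by
        intro l h hh
        obtain ⟨c, hc1, hc2⟩ := hdir (hcover h).choose l
        obtain ⟨m1, e1⟩ := key1 _ c hc1 ⟨h, hmono hc1 (hcover h).choose_spec⟩
          (hcover h).choose_spec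
        obtain ⟨m2, e2⟩ := key1 _ c hc2 ⟨h, hmono hc2 hh⟩ hh
        calc f h = (((R c) ⟨h, hmono hc1 (hcover h).choose_spec⟩ : Hs c) : H) := by
              rw [hf_def]
              exact congrArg Subtype.val e1
          _ = (((R l) ⟨h, hh⟩ : Hs l) : H) := (congrArg Subtype.val e2).symm
      have hadd : ∀ h1 h2 : H, f (h1 + h2) = f h1 + f h2 := by
        intro h1 h2
        obtain ⟨l1, hl1⟩ := hcover h1
        obtain ⟨l2, hl2⟩ := hcover h2
        obtain ⟨c, hc1, hc2⟩ := hdir l1 l2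
        have m1 : h1 ∈ Hs c := hmono hc1 hl1
        have m2 : h2 ∈ Hs c := hmono hc2 hl2
        rw [hf c h1 m1, hf c h2 m2, hf c (h1 + h2) (Submodule.add_mem _ m1 m2)]
        have : (⟨h1 + h2, Submodule.add_mem _ m1 m2⟩ : Hs c)
            = ⟨h1, m1⟩ + ⟨h2, m2⟩ := rfl
        rw [this, map_add, Submodule.coe_add]
      have hsmul : ∀ (c : ℂ) (h : H), f (c • h) = c • f h := by
        intro c h
        obtain ⟨l, hl⟩ := hcover h
        rw [hf l h hl, hf l (c • h) (Submodule.smul_mem _ _ hl)]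
        have : (⟨c • h, Submodule.smul_mem _ _ hl⟩ : Hs l) = c • ⟨h, hl⟩ := rfl
        rw [this, map_smul, Submodule.coe_smul]
      refine ⟨{ toFun := f, map_add' := hadd, map_smul' := hsmul }, ?_, ?_, ?_⟩
      · -- IsLocallyBounded
        intro l
        refine ⟨?_, ?_, ?_⟩
        · intro h hh
          show f h ∈ Hs l
          rw [hf l h hh]
          exact ((R l) ⟨h, hh⟩).2
        · intro h hperp u hu
          have hp : h ∈ (Hs l)ᗮ := (Submodule.mem_orthogonal _ _).2 hperp
          obtain ⟨c, hc1, hc2⟩ := hdir (hcover h).choose l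
          have hm : h ∈ Hs c := hmono hc1 (hcover h).choose_spec
          have hfl : f h ∈ (Hs l)ᗮ := by
            rw [hf c h hm]
            exact key2 l c hc2 ⟨h, hm⟩ hp
          exact (Submodule.mem_orthogonal _ _).1 hfl u hu
        · -- boundedness via the open mapping theorem
          haveI : CompleteSpace (Hs l) := (hcomplete l).completeSpace_coe
          obtain ⟨C, hC⟩ := (hT l).2.2
          have hbd : ∀ x : Hs l, ‖(Al l) x‖ ≤ (‖z‖ + max C 0) * ‖x‖ := by
            intro x
            rw [Submodule.coe_norm, Submodule.coe_norm, hAl_val, hAapp]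
            calc ‖z • (x : H) - T (x : H)‖
                ≤ ‖z • (x : H)‖ + ‖T (x : H)‖ := norm_sub_le _ _
              _ ≤ ‖z‖ * ‖(x : H)‖ + max C 0 * ‖(x : H)‖ := by
                  refine add_le_add (le_of_eq (norm_smul _ _)) ?_
                  exact le_trans (hC (x : H) x.2)
                    (mul_le_mul_of_nonneg_right (le_max_left _ _) (norm_nonneg _))
              _ = (‖z‖ + max C 0) * ‖(x : H)‖ := by ring
          set Ac : Hs l →L[ℂ] Hs l := LinearMap.mkContinuous (Al l) (‖z‖ + max C 0) hbd
            with hAc_def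
          have hAc : ∀ x : Hs l, Ac x = (Al l) x := fun x => rfl
          have hker : LinearMap.ker (Ac : Hs l →ₗ[ℂ] Hs l) = ⊥ := by
            rw [LinearMap.ker_eq_bot]
            intro x y hxy
            change Ac x = Ac y at hxy
            have h4 : (R l) (Ac x) = (R l) (Ac y) := by rw [hxy]
            rwa [hAc, hAc, hRA, hRA] at h4
          have hrange : LinearMap.range (Ac : Hs l →ₗ[ℂ] Hs l) = ⊤ := by
            rw [LinearMap.range_eq_top]
            intro x
            exact ⟨(R l) x, by change Ac ((R l) x) = x; rw [hAc]; exact hAR l x⟩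
          set e := ContinuousLinearEquiv.ofBijective Ac hker hrange with he_def
          have hRe : ∀ x : Hs l, (R l) x = e.symm x := by
            intro x
            have h1 : e ((R l) x) = x := by
              show Ac ((R l) x) = x
              rw [hAc]
              exact hAR l x
            calc (R l) x = e.symm (e ((R l) x)) := (e.symm_apply_apply _).symm
              _ = e.symm x := by rw [h1]
          refine ⟨‖(e.symm : Hs l →L[ℂ] Hs l)‖, ?_⟩
          intro h hh
          show ‖f h‖ ≤ _
          rw [hf l h hh, ← Submodule.coe_norm, hRe]
          calc ‖e.symm ⟨h, hh⟩‖
              ≤ ‖(e.symm : Hs l →L[ℂ] Hs l)‖ * ‖(⟨h, hh⟩ : Hs l)‖ :=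
                (e.symm : Hs l →L[ℂ] Hs l).le_opNorm _
            _ = ‖(e.symm : Hs l →L[ℂ] Hs l)‖ * ‖h‖ := by rw [Submodule.coe_norm]
      · -- (z • id - T) ∘ S = id
        apply LinearMap.ext
        intro h
        obtain ⟨l, hl⟩ := hcover h
        show A (f h) = h
        rw [hf l h hl, ← hAl_val, hAR]
      · -- S ∘ (z • id - T) = id
        apply LinearMap.ext
        intro h
        obtain ⟨l, hl⟩ := hcover h
        show f (A h) = h
        have hAh : A h ∈ Hs l := hAmem l h hl
        rw [hf l (A h) hAh]
        have h5 : (⟨A h, hAh⟩ : Hs l) = (Al l) ⟨h, hl⟩ :=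
          Subtype.ext (hAl_val l ⟨h, hl⟩).symm
        rw [h5, hRA]
  have E : {z : ℂ | ∃ S : H →ₗ[ℂ] H, IsLocallyBounded Hs S ∧
        (z • (LinearMap.id : H →ₗ[ℂ] H) - T) ∘ₗ S = LinearMap.id ∧
        S ∘ₗ (z • (LinearMap.id : H →ₗ[ℂ] H) - T) = LinearMap.id}
      = ⋂ l, resolventSet ℂ
          (LinearMap.restrict T (fun x hx => (hT l).1 x hx) : Module.End ℂ (Hs l)) := by
    ext z
    simpa [Set.mem_iInter] using key z
  refine ⟨E, ?_⟩
  rw [E, Set.compl_iInter]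
  rfl
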